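/- For every n ∈ ℕ and every nonzero z: z^n · P_n(1/z; α, β) = ((β)_n/(α+1)_n) · P_n(z; β−1, α+1). -/

import Mathlib

open Finset

/-- Pochhammer symbol `(a)_k = a (a+1) ⋯ (a+k-1)`. -/
noncomputable def poch (a : ℝ) (k : ℕ) : ℝ := ∏ i ∈ Finset.range k, (a + (i : ℝ))

/-- The Hendriksen–van Rossum polynomial `P_n(z; α, β)`. -/
noncomputable def HR (α β : ℝ) (n : ℕ) (z : ℝ) : ℝ :=
  (poch β n / poch (α + 1) n) *
    ∑ k ∈ Finset.range (n + 1),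
      poch (-(n : ℝ)) k * poch (α + 1) k /
          (poch (1 - β - (n : ℝ)) k * (Nat.factorial k : ℝ)) * z ^ k

/-- `d_m(α,β) = −(m+β)/(m+α+1)`. -/
noncomputable def dco (α β m : ℝ) : ℝ := -(m + β) / (m + α + 1)

/-- `b_m(α,β) = −m(m+α+β)/((m+α)(m+α+1))`. -/
noncomputable def bco (α β m : ℝ) : ℝ := -(m * (m + α + β)) / ((m + α) * (m + α + 1))


lemma poch_zero (a : ℝ) : poch a 0 = 1 := by simp [poch]

lemma poch_succ (a : ℝ) (k : ℕ) : poch a (k+1) = poch a k * (a + k) :=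
  Finset.prod_range_succ _ _

lemma poch_add (a : ℝ) (m k : ℕ) : poch a (m + k) = poch a m * poch (a + m) k := by
  unfold poch
  rw [Finset.prod_range_add]
  congr 1
  apply Finset.prod_congr rfl
  intro i _
  push_cast
  ring

lemma poch_neg (a : ℝ) (k : ℕ) : poch (-a) k = (-1)^k * poch (a - k + 1) k := by
  induction k with
  | zero => simp [poch_zero]
  | succ k ih =>
    rw [poch_succ, ih]
    rw [show a - (↑(k+1):ℝ) + 1 = (a - k + 1) - 1 by push_cast; ring]
    rw [show poch (a - ↑k + 1 - 1) (k+1) = (a - ↑k + 1 - 1) * poch (a - ↑k + 1) k by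
      have := Finset.prod_range_succ' (fun i => (a - ↑k + 1 - 1 + (i:ℝ))) k
      unfold poch
      rw [this]
      push_cast
      ring_nf]
    push_cast
    ring

lemma poch_nat (k m : ℕ) : poch ((k:ℝ)+1) m = ((k+m).factorial : ℝ) / (k.factorial : ℝ) := by
  induction m with
  | zero =>
    have : (k.factorial : ℝ) ≠ 0 := Nat.cast_ne_zero.mpr (Nat.factorial_ne_zero k)
    simp [poch_zero, this]
  | succ m ih =>
    rw [poch_succ, ih, show k + (m+1) = (k+m)+1 by ring, Nat.factorial_succ]
    have : (k.factorial : ℝ) ≠ 0 := Nat.cast_ne_zero.mpr (Nat.factorial_ne_zero k)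
    field_simp
    push_cast
    ring

lemma poch_ne_zero {a : ℝ} {k : ℕ} (h : ∀ i : ℕ, i < k → a + i ≠ 0) : poch a k ≠ 0 := by
  rw [poch]
  exact Finset.prod_ne_zero_iff.mpr (fun i hi => h i (Finset.mem_range.mp hi))

lemma poch_offset_ne {a : ℝ} (h : ∀ m : ℤ, a ≠ m) (c : ℤ) (k : ℕ) : poch (a + c) k ≠ 0 :=
  poch_ne_zero fun i _ hc => h (-c - i) (by push_cast; linarith)

lemma core (α β : ℝ) (hα : ∀ m : ℤ, α ≠ (m:ℝ)) (hβ : ∀ m : ℤ, β ≠ (m:ℝ)) (k m : ℕ) :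
    poch β (k+m) / poch (α+1) (k+m) *
      (poch (-(↑(k+m):ℝ)) m * poch (α+1) m /
        (poch (1 - β - (↑(k+m):ℝ)) m * (m.factorial : ℝ)))
    = poch (-(↑(k+m):ℝ)) k * poch β k / (poch (-α - (↑(k+m):ℝ)) k * (k.factorial : ℝ)) := by
  have e1 : poch β (k+m) = poch β k * poch (β + k) m := poch_add β k m
  have e2 : poch (α+1) (k+m) = poch (α+1) m * poch (α+1+m) k := by
    rw [add_comm k m, poch_add]
  have e3 : poch (-(↑(k+m):ℝ)) m = (-1)^m * poch ((k:ℝ)+1) m := by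
    rw [poch_neg, show (↑(k+m):ℝ) - m + 1 = (k:ℝ)+1 by push_cast; ring]
  have e4 : poch (1 - β - (↑(k+m):ℝ)) m = (-1)^m * poch (β + k) m := by
    rw [show (1:ℝ) - β - (↑(k+m):ℝ) = -(β + (↑(k+m):ℝ) - 1) by push_cast; ring, poch_neg,
      show β + (↑(k+m):ℝ) - 1 - m + 1 = β + k by push_cast; ring]
  have e5 : poch (-(↑(k+m):ℝ)) k = (-1)^k * poch ((m:ℝ)+1) k := by
    rw [poch_neg, show (↑(k+m):ℝ) - k + 1 = (m:ℝ)+1 by push_cast; ring]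
  have e6 : poch (-α - (↑(k+m):ℝ)) k = (-1)^k * poch (α+1+m) k := by
    rw [show -α - (↑(k+m):ℝ) = -(α + (↑(k+m):ℝ)) by ring, poch_neg,
      show α + (↑(k+m):ℝ) - k + 1 = α + 1 + m by push_cast; ring]
  have e7 : poch ((k:ℝ)+1) m = ((k+m).factorial : ℝ) / (k.factorial : ℝ) := poch_nat k m
  have e8 : poch ((m:ℝ)+1) k = ((k+m).factorial : ℝ) / (m.factorial : ℝ) := by
    rw [poch_nat, add_comm m k]
  have hA1 : poch (α+1) m ≠ 0 := by
    have := poch_offset_ne hα 1 m; norm_num at this; exact this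
  have hA2 : poch (α+1+m) k ≠ 0 := by
    have := poch_offset_ne hα (1+m) k; push_cast at this
    rwa [show α + (1 + (m:ℝ)) = α + 1 + m by ring] at this
  have hB1 : poch β k ≠ 0 := by
    have := poch_offset_ne hβ 0 k; norm_num at this; exact this
  have hB2 : poch (β + k) m ≠ 0 := by
    have := poch_offset_ne hβ k m; push_cast at this; exact this
  have hkf : (k.factorial : ℝ) ≠ 0 := Nat.cast_ne_zero.mpr (Nat.factorial_ne_zero k)
  have hmf : (m.factorial : ℝ) ≠ 0 := Nat.cast_ne_zero.mpr (Nat.factorial_ne_zero m)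
  rw [e1, e2, e3, e4, e5, e6, e7, e8]
  field_simp

/-- `z^n · P_n(1/z; α, β) = ((β)_n/(α+1)_n) · P_n(z; β−1, α+1)` for `z ≠ 0`. -/
theorem stmt3 (α β : ℝ)
    (hα : ∀ m : ℤ, α ≠ (m : ℝ)) (hβ : ∀ m : ℤ, β ≠ (m : ℝ))
    (hαβ : ∀ m : ℤ, α + β ≠ (m : ℝ))
    (n : ℕ) (z : ℝ) (hz : z ≠ 0) :
    z ^ n * HR α β n (1 / z) = (poch β n / poch (α + 1) n) * HR (β - 1) (α + 1) n z := by

  have hBn : poch β n ≠ 0 := by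
    have := poch_offset_ne hβ 0 n; norm_num at this; exact this
  have hAn : poch (α+1) n ≠ 0 := by
    have := poch_offset_ne hα 1 n; norm_num at this; exact this
  have step1 : z ^ n * HR α β n (1 / z)
      = ∑ k ∈ Finset.range (n+1), (poch β n / poch (α+1) n) *
          (poch (-(n:ℝ)) (n-k) * poch (α+1) (n-k) /
            (poch (1 - β - (n:ℝ)) (n-k) * (Nat.factorial (n-k) : ℝ))) * z ^ k := by
    rw [HR, Finset.mul_sum, Finset.mul_sum, ← Finset.sum_range_reflect]
    apply Finset.sum_congr rfl
    intro k hk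
    have hk' : k ≤ n := Nat.lt_succ_iff.mp (Finset.mem_range.mp hk)
    have hidx : n + 1 - 1 - k = n - k := by omega
    rw [hidx]
    have hw : z ^ n * (1/z) ^ (n-k) = z ^ k := by
      rw [one_div, inv_pow, show n = k + (n - k) by omega, pow_add]
      field_simp
      rw [Nat.add_sub_cancel_left]
    calc z ^ n * (poch β n / poch (α + 1) n *
          (poch (-(n:ℝ)) (n-k) * poch (α+1) (n-k) /
            (poch (1 - β - (n:ℝ)) (n-k) * (Nat.factorial (n-k) : ℝ)) * (1/z) ^ (n-k)))
        = poch β n / poch (α + 1) n *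
          (poch (-(n:ℝ)) (n-k) * poch (α+1) (n-k) /
            (poch (1 - β - (n:ℝ)) (n-k) * (Nat.factorial (n-k) : ℝ))) *
          (z ^ n * (1/z) ^ (n-k)) := by ring
      _ = _ := by rw [hw]
  have step2 : (poch β n / poch (α + 1) n) * HR (β - 1) (α + 1) n z
      = ∑ k ∈ Finset.range (n+1),
          poch (-(n:ℝ)) k * poch β k / (poch (-α - (n:ℝ)) k * (Nat.factorial k : ℝ)) * z ^ k := by
    rw [HR, show β - 1 + 1 = β by ring]
    rw [show (1:ℝ) - (α + 1) - (n:ℝ) = -α - (n:ℝ) by ring]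
    rw [← mul_assoc, show poch β n / poch (α+1) n * (poch (α+1) n / poch β n) = 1 by
      field_simp, one_mul]
  rw [step1, step2]
  apply Finset.sum_congr rfl
  intro k hk
  have hk' : k ≤ n := Nat.lt_succ_iff.mp (Finset.mem_range.mp hk)
  obtain ⟨m, rfl⟩ : ∃ m, n = k + m := ⟨n - k, by omega⟩
  have hm : k + m - k = m := by omega
  rw [hm]
  congr 1
  exact core α β hα hβ k m
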